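/- For all sufficiently large n divisible by 4, there exists a weakly connected simple directed graph G₀ on n vertices such that the probability that the directed two-hop process started at G₀ terminates within ⌊(n²·ln n)/32⌋ rounds is at most e^{−√n / 3}. -/

import Mathlib

open scoped Classical

noncomputable section

variable {V : Type} [Fintype V] [DecidableEq V]

/-- The out-neighbors of `u` in the directed graph `f`. -/
def outN (f : V → V → Bool) (u : V) : Finset V := Finset.univ.filter (fun v => f u v = true)

/-- The out-degree of `u` in the directed graph `f`. -/
def outDeg (f : V → V → Bool) (u : V) : ℕ := (outN f u).card

/-- The directed graph obtained from a choice function `c` in one round of the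
directed two-hop process: every vertex `u` adds the directed edge to the endpoint
`(c u).2` of its two-hop walk, provided it is not a self-loop; all additions are
simultaneous. -/
def dirNext (f : V → V → Bool) (c : V → V × V) : V → V → Bool :=
  fun a b => f a b || (decide (a ≠ b) && decide ((c a).2 = b))

/-- The probability that in one round of the directed two-hop process on the current
directed graph `f` the vertices make exactly the choices recorded by `c`: each vertex
`u` with at least one out-neighbor independently picks a uniformly random out-neighbor
`v = (c u).1` and, if `v` has at least one out-neighbor, a uniformly random
out-neighbor `w = (c u).2` of `v`.  Vertices with no out-neighbor get the dummy choice
`(u, u)`, and a dead-end first hop `v` gets the dummy second coordinate `u` (in both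
dummy cases no edge is added, as the would-be edge is a self-loop). -/
def dirWeight (f : V → V → Bool) (c : V → V × V) : ℝ :=
  ∏ u : V,
    if outDeg f u = 0 then (if c u = (u, u) then 1 else 0)
    else if (c u).1 ∈ outN f u then
      (if outDeg f (c u).1 = 0 then
        (if (c u).2 = u then (1 : ℝ) / (outDeg f u : ℝ) else 0)
       else if (c u).2 ∈ outN f (c u).1 then
        (1 : ℝ) / ((outDeg f u : ℝ) * (outDeg f (c u).1 : ℝ)) else 0)
    else 0

/-- Transition probability of one round of the directed two-hop process. -/
def dirStep (f g : V → V → Bool) : ℝ :=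
  ∑ c : V → V × V, if dirNext f c = g then dirWeight f c else 0

/-- `reaches f u v` means that the directed graph `f` contains a directed path from
`u` to `v`. -/
def reaches (f : V → V → Bool) (u v : V) : Prop :=
  Relation.ReflTransGen (fun a b => f a b = true) u v

/-- The directed two-hop process started at `f0` has terminated in the state `f` if,
for every ordered pair of distinct vertices `(u, v)` such that `f0` contains a directed
path from `u` to `v`, the directed edge `(u, v)` belongs to `f`. -/
def terminated (f0 f : V → V → Bool) : Prop :=
  ∀ u v : V, u ≠ v → reaches f0 u v → f u v = true

/-- `trajProb step g0 T E` is the probability, for the Markov chain on a finite state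
space `Γ` with one-step transition probabilities `step` started at `g0`, that the
trajectory `(g_0, g_1, …, g_T)` satisfies the event `E`; probabilities are realized as
a probability mass function on finite sequences of states.  (The trajectory is passed
to `E` as a function on `ℕ`, frozen at time `T`.) -/
def trajProb {Γ : Type} [Fintype Γ] (step : Γ → Γ → ℝ) (g0 : Γ) (T : ℕ)
    (E : (ℕ → Γ) → Prop) : ℝ :=
  ∑ s : Fin (T + 1) → Γ,
    if s 0 = g0 ∧ E (fun t => s ⟨min t T, Nat.lt_succ_of_le (Nat.min_le_right t T)⟩)
    then ∏ t : Fin T, step (s t.castSucc) (s t.succ) else 0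

/-- `distAt step g0 t` is the distribution (probability mass function) of the state at
time `t` of the Markov chain with one-step transition probabilities `step` started at
`g0`. -/
def distAt {Γ : Type} [Fintype Γ] (step : Γ → Γ → ℝ) (g0 : Γ) : ℕ → Γ → ℝ
  | 0 => fun g => if g = g0 then 1 else 0
  | (t + 1) => fun g => ∑ h : Γ, distAt step g0 t h * step h g

end


open scoped Classical

noncomputable section

variable {V : Type} [Fintype V] [DecidableEq V]

namespace TwoHopAux

/-- per-vertex weight factor -/
def W (f : V → V → Bool) (a : V) (x : V × V) : ℝ :=
  if outDeg f a = 0 then (if x = (a, a) then 1 else 0)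
  else if x.1 ∈ outN f a then
    (if outDeg f x.1 = 0 then
      (if x.2 = a then (1 : ℝ) / (outDeg f a : ℝ) else 0)
     else if x.2 ∈ outN f x.1 then
      (1 : ℝ) / ((outDeg f a : ℝ) * (outDeg f x.1 : ℝ)) else 0)
  else 0

lemma dirWeight_eq_prod (f : V → V → Bool) (c : V → V × V) :
    dirWeight f c = ∏ a : V, W f a (c a) := rfl

lemma W_nonneg (f : V → V → Bool) (a : V) (x : V × V) : 0 ≤ W f a x := by
  unfold W
  split_ifs <;> positivity

lemma dirWeight_nonneg (f : V → V → Bool) (c : V → V × V) : 0 ≤ dirWeight f c := by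
  rw [dirWeight_eq_prod]
  exact Finset.prod_nonneg fun a _ => W_nonneg f a _

lemma dirStep_nonneg (f g : V → V → Bool) : 0 ≤ dirStep f g := by
  refine Finset.sum_nonneg fun c _ => ?_
  split_ifs
  · exact dirWeight_nonneg f c
  · exact le_refl 0

lemma sum_W (f : V → V → Bool) (a : V) : ∑ x : V × V, W f a x = 1 := by
  by_cases h0 : outDeg f a = 0
  · rw [show (∑ x : V × V, W f a x) = ∑ x : V × V, if x = (a,a) then (1:ℝ) else 0 by
      refine Finset.sum_congr rfl fun x _ => ?_; simp [W, h0]]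
    rw [Finset.sum_ite_eq' Finset.univ (a,a) (fun _ => (1:ℝ))]
    simp
  · have hApos : 0 < (outDeg f a : ℝ) := by positivity
    rw [show (∑ x : V × V, W f a x)
        = ∑ v : V, ∑ w : V, W f a (v, w) from Fintype.sum_prod_type _]
    have hinner : ∀ v : V, (∑ w : V, W f a (v, w))
        = if v ∈ outN f a then (1:ℝ) / (outDeg f a : ℝ) else 0 := by
      intro v
      by_cases hv : v ∈ outN f a
      · simp only [hv, if_true]
        by_cases hv0 : outDeg f v = 0
        · rw [show (∑ w : V, W f a (v, w)) = ∑ w : V,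
              if w = a then (1:ℝ)/(outDeg f a : ℝ) else 0 by
            refine Finset.sum_congr rfl fun w _ => ?_; simp [W, h0, hv, hv0]]
          rw [Finset.sum_ite_eq' Finset.univ a (fun _ => (1:ℝ)/(outDeg f a:ℝ))]
          simp
        · have hvpos : 0 < (outDeg f v : ℝ) := by
            have := Nat.pos_of_ne_zero hv0; positivity
          rw [show (∑ w : V, W f a (v, w)) = ∑ w : V,
              if w ∈ outN f v then (1:ℝ)/((outDeg f a : ℝ) * (outDeg f v : ℝ)) else 0 by
            refine Finset.sum_congr rfl fun w _ => ?_; simp [W, h0, hv, hv0]]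
          rw [Finset.sum_ite_mem]
          rw [Finset.univ_inter, Finset.sum_const]
          rw [show (outN f v).card = outDeg f v from rfl]
          rw [nsmul_eq_mul]
          field_simp
      · simp only [hv, if_false]
        refine Finset.sum_eq_zero fun w _ => ?_
        simp [W, h0, hv]
    rw [Finset.sum_congr rfl fun v _ => hinner v]
    rw [Finset.sum_ite_mem, Finset.univ_inter, Finset.sum_const]
    rw [show (outN f a).card = outDeg f a from rfl]
    rw [nsmul_eq_mul]
    field_simp

lemma sum_dirWeight (f : V → V → Bool) : ∑ c : V → V × V, dirWeight f c = 1 := by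
  have := Finset.prod_univ_sum (fun _ : V => (Finset.univ : Finset (V × V)))
      (fun a x => W f a x)
  simp only [Fintype.piFinset_univ] at this
  rw [show (∑ c : V → V × V, dirWeight f c) = ∑ c : V → V × V, ∏ a : V, W f a (c a) from
    Finset.sum_congr rfl fun c _ => dirWeight_eq_prod f c]
  rw [← this]
  simp [sum_W]

/-- factorization of a sum weighted by a function of the choice at one vertex -/
lemma sum_dirWeight_mul (f : V → V → Bool) (p : V) (β : V × V → ℝ) :
    ∑ c : V → V × V, dirWeight f c * β (c p) = ∑ x : V × V, W f p x * β x := by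
  set g : V → V × V → ℝ := fun a x => if a = p then W f a x * β x else W f a x with hg
  have key : ∀ c : V → V × V, dirWeight f c * β (c p) = ∏ a : V, g a (c a) := by
    intro c
    rw [dirWeight_eq_prod,
      ← Finset.mul_prod_erase Finset.univ (fun a => W f a (c a)) (Finset.mem_univ p),
      ← Finset.mul_prod_erase Finset.univ (fun a => g a (c a)) (Finset.mem_univ p),
      Finset.prod_congr rfl (fun a ha => show g a (c a) = W f a (c a) from
        if_neg (Finset.mem_erase.mp ha).1)]
    show (W f p (c p) * _) * β (c p) = (if p = p then W f p (c p) * β (c p) else _) * _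
    rw [if_pos rfl]; ring
  rw [Finset.sum_congr rfl fun c _ => key c]
  have hfact := Finset.prod_univ_sum (fun _ : V => (Finset.univ : Finset (V × V))) g
  simp only [Fintype.piFinset_univ] at hfact
  rw [← hfact,
    ← Finset.mul_prod_erase Finset.univ (fun a => ∑ x : V × V, g a x) (Finset.mem_univ p),
    Finset.prod_congr rfl (fun a ha => show (∑ x : V × V, g a x) = 1 by
      rw [Finset.sum_congr rfl fun x _ => show g a x = W f a x from
        if_neg (Finset.mem_erase.mp ha).1, sum_W]),
    Finset.prod_const_one, mul_one]
  exact Finset.sum_congr rfl fun x _ => show g p x = _ from if_pos rfl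

lemma sum_dirStep_mul (f : V → V → Bool) (Φ : (V → V → Bool) → ℝ) :
    ∑ g : V → V → Bool, dirStep f g * Φ g
      = ∑ c : V → V × V, dirWeight f c * Φ (dirNext f c) := by
  unfold dirStep
  rw [Finset.sum_congr rfl (fun g _ => Finset.sum_mul ..)]
  rw [Finset.sum_comm]
  refine Finset.sum_congr rfl fun c _ => ?_
  rw [show (∑ g : V → V → Bool, (if dirNext f c = g then dirWeight f c else 0) * Φ g)
      = ∑ g : V → V → Bool, if dirNext f c = g then dirWeight f c * Φ g else 0 from
    Finset.sum_congr rfl fun g _ => by split_ifs <;> simp]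
  rw [Finset.sum_ite_eq Finset.univ (dirNext f c) (fun g => dirWeight f c * Φ g)]
  simp

lemma dirStep_mono {f g : V → V → Bool} (h : dirStep f g ≠ 0) :
    ∀ a b : V, f a b = true → g a b = true := by
  obtain ⟨c, -, hc⟩ := Finset.exists_ne_zero_of_sum_ne_zero h
  have hnext : dirNext f c = g := by
    by_contra hne
    rw [if_neg hne] at hc
    exact hc rfl
  intro a b hab
  rw [← hnext]
  unfold dirNext
  simp [hab]


section Traj

lemma traj_bound {Γ : Type} [Fintype Γ] (step : Γ → Γ → ℝ) (Φ : Γ → ℝ) (w : ℝ)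
    (hw : 1 ≤ w) (hstep : ∀ g g', 0 ≤ step g g') (hΦ : ∀ g, 0 ≤ Φ g)
    (hone : ∀ g, ∑ g' : Γ, step g g' * Φ g' ≤ w * Φ g) :
    ∀ (t : ℕ) (g0 : Γ),
      (∑ s : Fin (t + 1) → Γ,
        (if s 0 = g0 then ∏ i : Fin t, step (s i.castSucc) (s i.succ) else 0)
          * Φ (s (Fin.last t))) ≤ w ^ t * Φ g0 := by
  have hw0 : (0:ℝ) ≤ w := le_trans zero_le_one hw
  intro t
  induction t with
  | zero =>
    intro g0
    rw [Fintype.sum_equiv (Equiv.funUnique (Fin 1) Γ)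
      (fun s => (if s 0 = g0 then ∏ i : Fin 0, step (s i.castSucc) (s i.succ) else 0)
        * Φ (s (Fin.last 0)))
      (fun g => (if g = g0 then 1 else 0) * Φ g)
      (fun s => by simp [Fin.last])]
    rw [pow_zero, one_mul]
    have : (∑ g : Γ, (if g = g0 then (1:ℝ) else 0) * Φ g)
        = ∑ g : Γ, if g = g0 then Φ g else 0 :=
      Finset.sum_congr rfl fun g _ => by split_ifs <;> simp
    rw [this, Finset.sum_ite_eq' Finset.univ g0 Φ, if_pos (Finset.mem_univ g0)]
  | succ t ih =>
    intro g0
    have hsplit : (∑ s : Fin (t + 2) → Γ,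
        (if s 0 = g0 then ∏ i : Fin (t+1), step (s i.castSucc) (s i.succ) else 0)
          * Φ (s (Fin.last (t+1))))
        = ∑ q : Γ × (Fin (t + 1) → Γ),
          (if q.1 = g0 then step q.1 (q.2 0) * ∏ i : Fin t, step (q.2 i.castSucc) (q.2 i.succ)
            else 0) * Φ (q.2 (Fin.last t)) := by
      refine Fintype.sum_equiv (Fin.consEquiv (fun _ => Γ)).symm _ _ (fun s => ?_)
      simp only [Fin.consEquiv_symm_apply]
      have h1 : (∏ i : Fin (t+1), step (s i.castSucc) (s i.succ))
          = step (s 0) (s 1) * ∏ i : Fin t, step (s i.succ.castSucc) (s i.succ.succ) :=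
        Fin.prod_univ_succ _
      have h2 : ∀ i : Fin t, step (s i.succ.castSucc) (s i.succ.succ)
          = step ((fun j => s j.succ) i.castSucc) ((fun j => s j.succ) i.succ) := by
        intro i; rw [← Fin.succ_castSucc]
      have h3 : s (Fin.last (t+1)) = (fun j => s j.succ) (Fin.last t) := by
        rw [← Fin.succ_last]
      rw [h1, Finset.prod_congr rfl (fun i _ => h2 i), h3]
      rfl
    rw [hsplit, Fintype.sum_prod_type]
    have collapse : ∀ g1 : Γ, (∑ s' : Fin (t+1) → Γ,
        (if g1 = g0 then step g1 (s' 0) * ∏ i : Fin t, step (s' i.castSucc) (s' i.succ) else 0)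
          * Φ (s' (Fin.last t)))
        = if g1 = g0 then
            (∑ s' : Fin (t+1) → Γ,
              step g0 (s' 0) * ((∏ i : Fin t, step (s' i.castSucc) (s' i.succ))
                * Φ (s' (Fin.last t)))) else 0 := by
      intro g1
      split_ifs with h
      · subst h
        refine Finset.sum_congr rfl fun s' _ => by ring
      · refine Finset.sum_eq_zero fun s' _ => by simp [h]
    rw [Finset.sum_congr rfl fun g1 _ => collapse g1,
      Finset.sum_ite_eq' Finset.univ g0 _, if_pos (Finset.mem_univ g0)]
    have inner : (∑ s' : Fin (t+1) → Γ,
          step g0 (s' 0) * ((∏ i : Fin t, step (s' i.castSucc) (s' i.succ))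
            * Φ (s' (Fin.last t))))
        = ∑ g1 : Γ, step g0 g1 * (∑ s' : Fin (t+1) → Γ,
            (if s' 0 = g1 then ∏ i : Fin t, step (s' i.castSucc) (s' i.succ) else 0)
              * Φ (s' (Fin.last t))) := by
      have expand : ∀ g1 : Γ, step g0 g1 * (∑ s' : Fin (t+1) → Γ,
            (if s' 0 = g1 then ∏ i : Fin t, step (s' i.castSucc) (s' i.succ) else 0)
              * Φ (s' (Fin.last t)))
          = ∑ s' : Fin (t+1) → Γ,
              (if s' 0 = g1 then step g0 (s' 0) * ((∏ i : Fin t, step (s' i.castSucc) (s' i.succ))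
                * Φ (s' (Fin.last t))) else 0) := by
        intro g1
        rw [Finset.mul_sum]
        refine Finset.sum_congr rfl fun s' _ => ?_
        split_ifs with h
        · rw [h]
        · simp
      rw [Finset.sum_congr rfl fun g1 _ => expand g1, Finset.sum_comm]
      refine Finset.sum_congr rfl fun s' _ => ?_
      rw [Finset.sum_ite_eq Finset.univ (s' 0) _, if_pos (Finset.mem_univ _)]
    rw [inner]
    have step1 : (∑ g1 : Γ, step g0 g1 * (∑ s' : Fin (t+1) → Γ,
            (if s' 0 = g1 then ∏ i : Fin t, step (s' i.castSucc) (s' i.succ) else 0)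
              * Φ (s' (Fin.last t))))
        ≤ ∑ g1 : Γ, step g0 g1 * (w ^ t * Φ g1) := by
      refine Finset.sum_le_sum fun g1 _ => ?_
      exact mul_le_mul_of_nonneg_left (ih g1) (hstep g0 g1)
    refine le_trans step1 ?_
    have : (∑ g1 : Γ, step g0 g1 * (w ^ t * Φ g1)) = w ^ t * ∑ g1 : Γ, step g0 g1 * Φ g1 := by
      rw [Finset.mul_sum]; exact Finset.sum_congr rfl fun g1 _ => by ring
    rw [this, pow_succ]
    calc w ^ t * ∑ g1 : Γ, step g0 g1 * Φ g1 ≤ w ^ t * (w * Φ g0) :=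
          mul_le_mul_of_nonneg_left (hone g0) (pow_nonneg hw0 t)
      _ = w ^ t * w * Φ g0 := by ring

end Traj

section HFn

def hFn (cN : ℕ) (R : ℝ) (k : ℕ) : ℝ :=
  ∏ i ∈ Finset.range (cN - k), (((i : ℝ) + 1) / ((i : ℝ) + 1 + R))

variable {cN : ℕ} {R : ℝ}

lemma hFn_nonneg (hR : 0 ≤ R) (k : ℕ) : 0 ≤ hFn cN R k := by
  refine Finset.prod_nonneg fun i _ => ?_
  positivity

lemma hFn_le_one (hR : 0 ≤ R) (k : ℕ) : hFn cN R k ≤ 1 := by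
  refine Finset.prod_le_one (fun i _ => by positivity) (fun i _ => ?_)
  rw [div_le_one (by positivity)]
  linarith

lemma hFn_self : hFn cN R cN = 1 := by
  unfold hFn
  rw [Nat.sub_self, Finset.range_zero, Finset.prod_empty]

lemma hFn_step (hR : 0 ≤ R) {k : ℕ} (hk : k < cN) :
    hFn cN R k = hFn cN R (k + 1) * (((cN : ℝ) - k) / (((cN : ℝ) - k) + R)) := by
  unfold hFn
  have h1 : cN - k = (cN - (k+1)) + 1 := by omega
  rw [h1, Finset.prod_range_succ]
  congr 2 <;>
  · have : ((cN - (k+1) : ℕ) : ℝ) = (cN : ℝ) - k - 1 := by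
      have := Nat.cast_sub (le_of_lt hk) (R := ℝ)
      push_cast [Nat.cast_sub (Nat.succ_le_of_lt hk)]
      ring
    rw [this]; ring

lemma hFn_mono (hR : 0 ≤ R) (k : ℕ) : hFn cN R k ≤ hFn cN R (k + 1) := by
  rcases lt_or_ge k cN with hk | hk
  · rw [hFn_step hR hk]
    have h1 : 0 ≤ hFn cN R (k+1) := hFn_nonneg hR _
    have hM : (0:ℝ) < (cN : ℝ) - k := by
      have : (k:ℝ) < cN := by exact_mod_cast hk
      linarith
    have : ((cN : ℝ) - k) / (((cN : ℝ) - k) + R) ≤ 1 := by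
      rw [div_le_one (by linarith)]; linarith
    nlinarith
  · unfold hFn
    rw [Nat.sub_eq_zero_of_le hk, Nat.sub_eq_zero_of_le (le_trans hk (Nat.le_succ k))]

lemma hFn_key (hR : 0 ≤ R) {k : ℕ} (hk : k ≤ cN) :
    ((cN : ℝ) - k) * (hFn cN R (k + 1) - hFn cN R k) ≤ R * hFn cN R k := by
  rcases eq_or_lt_of_le hk with he | hlt
  · subst he
    simp [hFn_self]
    positivity
  · have hM : (0:ℝ) < (cN : ℝ) - k := by
      have : (k:ℝ) < cN := by exact_mod_cast hlt
      linarith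
    have hMR : (0:ℝ) < ((cN : ℝ) - k) + R := by linarith
    have hstep := hFn_step hR hlt
    have h1 : 0 ≤ hFn cN R (k+1) := hFn_nonneg hR _
    rw [hstep]
    have expand : hFn cN R (k + 1) - hFn cN R (k + 1) * (((cN : ℝ) - k) / (((cN : ℝ) - k) + R))
        = hFn cN R (k+1) * (R / (((cN : ℝ) - k) + R)) := by
      field_simp
      ring
    rw [expand]
    rw [show ((cN : ℝ) - k) * (hFn cN R (k+1) * (R / (((cN : ℝ) - k) + R)))
        = R * (hFn cN R (k+1) * (((cN : ℝ) - k) / (((cN : ℝ) - k) + R))) by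
      field_simp]

end HFn

section Construction

variable (p u : V) (C D : Finset V)

structure Good (p u : V) (C D : Finset V) : Prop where
  hpu : p ≠ u
  hpC : p ∉ C
  hpD : p ∉ D
  huC : u ∉ C
  huD : u ∉ D
  hCD : Disjoint C D

def F (K L : Finset V) : V → V → Bool := fun a b =>
  decide ((a = p ∧ (b = u ∨ b ∈ D ∨ b ∈ K)) ∨ (a = u ∧ (b = p ∨ b ∈ C ∨ b ∈ L)))

variable {p u C D}

lemma F_true_iff (K L : Finset V) (a b : V) :
    F p u C D K L a b = true
      ↔ ((a = p ∧ (b = u ∨ b ∈ D ∨ b ∈ K)) ∨ (a = u ∧ (b = p ∨ b ∈ C ∨ b ∈ L))) := by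
  simp [F]

lemma outN_F_p (hG : Good p u C D) (hK : K ⊆ C) (hL : L ⊆ D) :
    outN (F p u C D K L) p = insert u (D ∪ K) := by
  have hpu := hG.hpu
  ext x
  simp only [outN, Finset.mem_filter, Finset.mem_univ, true_and, F_true_iff,
    Finset.mem_insert, Finset.mem_union, hpu, false_and, or_false, true_and,
    eq_self_iff_true]

lemma outN_F_u (hG : Good p u C D) (hK : K ⊆ C) (hL : L ⊆ D) :
    outN (F p u C D K L) u = insert p (C ∪ L) := by
  have hpu : ¬ (u = p) := fun h => hG.hpu h.symm
  ext x
  simp only [outN, Finset.mem_filter, Finset.mem_univ, true_and, F_true_iff,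
    Finset.mem_insert, Finset.mem_union, hpu, false_and, false_or, true_and,
    eq_self_iff_true]

lemma outN_F_sink (hG : Good p u C D) {a : V} (hap : a ≠ p) (hau : a ≠ u)
    (K L : Finset V) : outN (F p u C D K L) a = ∅ := by
  ext x
  simp only [outN, Finset.mem_filter, Finset.mem_univ, true_and, F_true_iff,
    Finset.notMem_empty, iff_false, hap, hau, false_and, or_false]

lemma not_mem_DK (hG : Good p u C D) (hK : K ⊆ C) : u ∉ D ∪ K := by
  simp only [Finset.mem_union]
  rintro (h | h)
  · exact hG.huD h
  · exact hG.huC (hK h)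

lemma not_mem_CL (hG : Good p u C D) (hL : L ⊆ D) : p ∉ C ∪ L := by
  simp only [Finset.mem_union]
  rintro (h | h)
  · exact hG.hpC h
  · exact hG.hpD (hL h)

lemma disjoint_DK (hG : Good p u C D) (hK : K ⊆ C) : Disjoint D K :=
  Finset.disjoint_of_subset_right hK hG.hCD.symm

lemma disjoint_CL (hG : Good p u C D) (hL : L ⊆ D) : Disjoint C L :=
  Finset.disjoint_of_subset_right hL hG.hCD

lemma outDeg_F_p (hG : Good p u C D) (hK : K ⊆ C) (hL : L ⊆ D) :
    outDeg (F p u C D K L) p = D.card + K.card + 1 := by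
  unfold outDeg
  rw [outN_F_p hG hK hL, Finset.card_insert_of_notMem (not_mem_DK hG hK),
    Finset.card_union_of_disjoint (disjoint_DK hG hK)]

lemma outDeg_F_u (hG : Good p u C D) (hK : K ⊆ C) (hL : L ⊆ D) :
    outDeg (F p u C D K L) u = C.card + L.card + 1 := by
  unfold outDeg
  rw [outN_F_u hG hK hL, Finset.card_insert_of_notMem (not_mem_CL hG hL),
    Finset.card_union_of_disjoint (disjoint_CL hG hL)]

lemma outDeg_F_p_pos (hG : Good p u C D) (hK : K ⊆ C) (hL : L ⊆ D) :
    outDeg (F p u C D K L) p ≠ 0 := by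
  rw [outDeg_F_p hG hK hL]; omega

lemma outDeg_F_u_pos (hG : Good p u C D) (hK : K ⊆ C) (hL : L ⊆ D) :
    outDeg (F p u C D K L) u ≠ 0 := by
  rw [outDeg_F_u hG hK hL]; omega

lemma outDeg_F_sink (hG : Good p u C D) {a : V} (hap : a ≠ p) (hau : a ≠ u)
    (K L : Finset V) : outDeg (F p u C D K L) a = 0 := by
  unfold outDeg
  rw [outN_F_sink hG hap hau K L, Finset.card_empty]

variable (p u C D) in
def Kof (g : V → V → Bool) : Finset V := C.filter (fun y => g p y = true)

variable (p u C D) in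
def Lof (g : V → V → Bool) : Finset V := D.filter (fun y => g u y = true)

variable (p u C D) in
def InRange (g : V → V → Bool) : Prop := g = F p u C D (Kof p C g) (Lof u D g)

lemma Kof_subset (g : V → V → Bool) : Kof p C g ⊆ C := Finset.filter_subset _ _
lemma Lof_subset (g : V → V → Bool) : Lof u D g ⊆ D := Finset.filter_subset _ _

lemma Kof_F (hG : Good p u C D) (hK : K ⊆ C) (hL : L ⊆ D) :
    Kof p C (F p u C D K L) = K := by
  ext y
  simp only [Kof, Finset.mem_filter, F_true_iff]
  constructor
  · rintro ⟨hyC, hy⟩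
    have h1 : y ≠ u := fun h => hG.huC (h ▸ hyC)
    have h2 : y ∉ D := Finset.disjoint_left.mp hG.hCD hyC
    have h3 : ¬ (p = u) := hG.hpu
    tauto
  · intro h
    refine ⟨hK h, ?_⟩
    tauto

lemma Lof_F (hG : Good p u C D) (hK : K ⊆ C) (hL : L ⊆ D) :
    Lof u D (F p u C D K L) = L := by
  ext y
  simp only [Lof, Finset.mem_filter, F_true_iff]
  constructor
  · rintro ⟨hyD, hy⟩
    have h1 : y ≠ p := fun h => hG.hpD (h ▸ hyD)
    have h2 : y ∉ C := Finset.disjoint_right.mp hG.hCD hyD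
    have h3 : ¬ (u = p) := fun h => hG.hpu h.symm
    tauto
  · intro h
    refine ⟨hL h, ?_⟩
    tauto

lemma InRange_F (hG : Good p u C D) (hK : K ⊆ C) (hL : L ⊆ D) :
    InRange p u C D (F p u C D K L) := by
  unfold InRange
  rw [Kof_F hG hK hL, Lof_F hG hK hL]

end Construction

section Construction2

variable {p u : V} {C D K L : Finset V}

lemma bool_ext {x y : Bool} (h : x = true ↔ y = true) : x = y := by
  cases x <;> cases y <;> simp_all

def Knext (p u : V) (C K : Finset V) (ch : V → V × V) : Finset V :=
  if (ch p).1 = u ∧ (ch p).2 ∈ C then insert (ch p).2 K else K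

def Lnext (p u : V) (D L : Finset V) (ch : V → V × V) : Finset V :=
  if (ch u).1 = p ∧ (ch u).2 ∈ D then insert (ch u).2 L else L

lemma Knext_subset (hK : K ⊆ C) (ch : V → V × V) : Knext p u C K ch ⊆ C := by
  unfold Knext; split_ifs with h
  · exact Finset.insert_subset h.2 hK
  · exact hK

lemma Lnext_subset (hL : L ⊆ D) (ch : V → V × V) : Lnext p u D L ch ⊆ D := by
  unfold Lnext; split_ifs with h
  · exact Finset.insert_subset h.2 hL
  · exact hL

lemma dirNext_true_iff (f : V → V → Bool) (ch : V → V × V) (a b : V) :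
    dirNext f ch a b = true ↔ (f a b = true ∨ (a ≠ b ∧ (ch a).2 = b)) := by
  simp [dirNext]

lemma F_p_iff (hG : Good p u C D) (b : V) :
    F p u C D K L p b = true ↔ (b = u ∨ b ∈ D ∨ b ∈ K) := by
  rw [F_true_iff]
  have := hG.hpu
  tauto

lemma F_u_iff (hG : Good p u C D) (b : V) :
    F p u C D K L u b = true ↔ (b = p ∨ b ∈ C ∨ b ∈ L) := by
  rw [F_true_iff]
  have : ¬ (u = p) := fun h => hG.hpu h.symm
  tauto

lemma F_sink_iff {a : V} (hap : a ≠ p) (hau : a ≠ u) (b : V) :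
    F p u C D K L a b = true ↔ False := by
  rw [F_true_iff]
  tauto

lemma W_facts_p (hG : Good p u C D) (hK : K ⊆ C) (hL : L ⊆ D)
    {ch : V → V × V} (hw : W (F p u C D K L) p (ch p) ≠ 0) :
    ((ch p).1 = u ∧ (ch p).2 ∈ insert p (C ∪ L)) ∨ ((ch p).1 ≠ u ∧ (ch p).2 = p) := by
  set f := F p u C D K L with hf
  unfold W at hw
  rw [if_neg (outDeg_F_p_pos hG hK hL)] at hw
  have h1 : (ch p).1 ∈ outN f p := by
    by_contra hc
    rw [if_neg hc] at hw
    exact hw rfl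
  rw [if_pos h1] at hw
  rw [outN_F_p hG hK hL, Finset.mem_insert] at h1
  rcases h1 with h1 | h1
  · left
    refine ⟨h1, ?_⟩
    rw [if_neg (by rw [h1]; exact outDeg_F_u_pos hG hK hL)] at hw
    have h2 : (ch p).2 ∈ outN f (ch p).1 := by
      by_contra hc
      rw [if_neg hc] at hw
      exact hw rfl
    rw [h1, outN_F_u hG hK hL] at h2
    exact h2
  · right
    have hne1 : (ch p).1 ≠ p := by
      intro hcp
      rw [hcp] at h1
      rcases Finset.mem_union.mp h1 with h | h
      · exact hG.hpD h
      · exact hG.hpC (hK h)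
    have hne2 : (ch p).1 ≠ u := fun h => not_mem_DK hG hK (h ▸ h1)
    refine ⟨hne2, ?_⟩
    rw [if_pos (outDeg_F_sink hG hne1 hne2 K L)] at hw
    by_contra hc
    rw [if_neg hc] at hw
    exact hw rfl

lemma W_facts_u (hG : Good p u C D) (hK : K ⊆ C) (hL : L ⊆ D)
    {ch : V → V × V} (hw : W (F p u C D K L) u (ch u) ≠ 0) :
    ((ch u).1 = p ∧ (ch u).2 ∈ insert u (D ∪ K)) ∨ ((ch u).1 ≠ p ∧ (ch u).2 = u) := by
  set f := F p u C D K L with hf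
  unfold W at hw
  rw [if_neg (outDeg_F_u_pos hG hK hL)] at hw
  have h1 : (ch u).1 ∈ outN f u := by
    by_contra hc
    rw [if_neg hc] at hw
    exact hw rfl
  rw [if_pos h1] at hw
  rw [outN_F_u hG hK hL, Finset.mem_insert] at h1
  rcases h1 with h1 | h1
  · left
    refine ⟨h1, ?_⟩
    rw [if_neg (by rw [h1]; exact outDeg_F_p_pos hG hK hL)] at hw
    have h2 : (ch u).2 ∈ outN f (ch u).1 := by
      by_contra hc
      rw [if_neg hc] at hw
      exact hw rfl
    rw [h1, outN_F_p hG hK hL] at h2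
    exact h2
  · right
    have hne1 : (ch u).1 ≠ u := by
      intro hcp
      rw [hcp] at h1
      rcases Finset.mem_union.mp h1 with h | h
      · exact hG.huC h
      · exact hG.huD (hL h)
    have hne2 : (ch u).1 ≠ p := fun h => not_mem_CL hG hL (h ▸ h1)
    refine ⟨hne2, ?_⟩
    rw [if_pos (outDeg_F_sink hG hne2 hne1 K L)] at hw
    by_contra hc
    rw [if_neg hc] at hw
    exact hw rfl

lemma W_facts_sink (hG : Good p u C D) (hK : K ⊆ C) (hL : L ⊆ D)
    {a : V} (hap : a ≠ p) (hau : a ≠ u)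
    {ch : V → V × V} (hw : W (F p u C D K L) a (ch a) ≠ 0) :
    ch a = (a, a) := by
  unfold W at hw
  rw [if_pos (outDeg_F_sink hG hap hau K L)] at hw
  by_contra hc
  rw [if_neg hc] at hw
  exact hw rfl

lemma dirNext_support (hG : Good p u C D) (hK : K ⊆ C) (hL : L ⊆ D)
    {ch : V → V × V} (hw : dirWeight (F p u C D K L) ch ≠ 0) :
    dirNext (F p u C D K L) ch = F p u C D (Knext p u C K ch) (Lnext p u D L ch) := by
  set f := F p u C D K L with hf
  have hWa : ∀ a : V, W f a (ch a) ≠ 0 := by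
    rw [dirWeight_eq_prod] at hw
    exact fun a => Finset.prod_ne_zero_iff.mp hw a (Finset.mem_univ a)
  funext a b
  apply bool_ext
  rw [dirNext_true_iff]
  by_cases hap : a = p
  · subst hap
    rw [F_p_iff hG, F_p_iff hG]
    rcases W_facts_p hG hK hL (hWa a) with ⟨hc1, hc2⟩ | ⟨hc1, hc2⟩
    · rw [Finset.mem_insert, Finset.mem_union] at hc2
      rcases hc2 with hc2 | hc2 | hc2
      · -- second hop back to p
        rw [show Knext a u C K ch = K by
          unfold Knext
          rw [if_neg (fun hcon => hG.hpC (hc2 ▸ hcon.2))]]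
        constructor
        · rintro (h | ⟨hne, heq⟩)
          · exact h
          · exact absurd (heq ▸ hc2).symm hne
        · exact Or.inl
      · -- second hop to a coupon
        rw [show Knext a u C K ch = insert (ch a).2 K by
          unfold Knext
          rw [if_pos ⟨hc1, hc2⟩]]
        have hpne : a ≠ (ch a).2 := fun h => hG.hpC (h ▸ hc2)
        constructor
        · rintro (h | ⟨hne, heq⟩)
          · rcases h with h | h | h
            · exact Or.inl h
            · exact Or.inr (Or.inl h)
            · exact Or.inr (Or.inr (Finset.mem_insert_of_mem h))
          · exact Or.inr (Or.inr (heq ▸ Finset.mem_insert_self _ _))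
        · rintro (h | h | h)
          · exact Or.inl (Or.inl h)
          · exact Or.inl (Or.inr (Or.inl h))
          · rcases Finset.mem_insert.mp h with h | h
            · exact Or.inr ⟨h ▸ hpne, h.symm⟩
            · exact Or.inl (Or.inr (Or.inr h))
      · -- second hop to an already-collected L coupon (in D)
        have hD : (ch a).2 ∈ D := hL hc2
        rw [show Knext a u C K ch = K by
          unfold Knext
          rw [if_neg (fun hcon => Finset.disjoint_left.mp hG.hCD hcon.2 hD)]]
        constructor
        · rintro (h | ⟨hne, heq⟩)
          · exact h
          · exact Or.inr (Or.inl (heq ▸ hD))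
        · exact Or.inl
    · -- first hop to a sink
      rw [show Knext a u C K ch = K by
        unfold Knext
        rw [if_neg (fun hcon => hc1 hcon.1)]]
      constructor
      · rintro (h | ⟨hne, heq⟩)
        · exact h
        · exact absurd (heq ▸ hc2).symm hne
      · exact Or.inl
  · by_cases hau : a = u
    · subst hau
      rw [F_u_iff hG, F_u_iff hG]
      rcases W_facts_u hG hK hL (hWa a) with ⟨hc1, hc2⟩ | ⟨hc1, hc2⟩
      · rw [Finset.mem_insert, Finset.mem_union] at hc2
        rcases hc2 with hc2 | hc2 | hc2
        · rw [show Lnext p a D L ch = L by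
            unfold Lnext
            rw [if_neg (fun hcon => hG.huD (hc2 ▸ hcon.2))]]
          constructor
          · rintro (h | ⟨hne, heq⟩)
            · exact h
            · exact absurd (heq ▸ hc2).symm hne
          · exact Or.inl
        · have hDD : (ch a).2 ∈ D := hc2
          rw [show Lnext p a D L ch = insert (ch a).2 L by
            unfold Lnext
            rw [if_pos ⟨hc1, hDD⟩]]
          have hune : a ≠ (ch a).2 := fun h => hG.huD (h ▸ hDD)
          constructor
          · rintro (h | ⟨hne, heq⟩)
            · rcases h with h | h | h
              · exact Or.inl h
              · exact Or.inr (Or.inl h)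
              · exact Or.inr (Or.inr (Finset.mem_insert_of_mem h))
            · exact Or.inr (Or.inr (heq ▸ Finset.mem_insert_self _ _))
          · rintro (h | h | h)
            · exact Or.inl (Or.inl h)
            · exact Or.inl (Or.inr (Or.inl h))
            · rcases Finset.mem_insert.mp h with h | h
              · exact Or.inr ⟨h ▸ hune, h.symm⟩
              · exact Or.inl (Or.inr (Or.inr h))
        · have hC : (ch a).2 ∈ C := hK hc2
          rw [show Lnext p a D L ch = L by
            unfold Lnext
            rw [if_neg (fun hcon => Finset.disjoint_left.mp hG.hCD hC hcon.2)]]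
          constructor
          · rintro (h | ⟨hne, heq⟩)
            · exact h
            · exact Or.inr (Or.inl (heq ▸ hC))
          · exact Or.inl
      · rw [show Lnext p a D L ch = L by
          unfold Lnext
          rw [if_neg (fun hcon => hc1 hcon.1)]]
        constructor
        · rintro (h | ⟨hne, heq⟩)
          · exact h
          · exact absurd (heq ▸ hc2).symm hne
        · exact Or.inl
    · -- sink row
      have hch := W_facts_sink hG hK hL hap hau (hWa a)
      rw [F_sink_iff hap hau, F_sink_iff hap hau]
      constructor
      · rintro (h | ⟨hne, heq⟩)
        · exact h
        · rw [hch] at heq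
          exact hne heq
      · exact False.elim

end Construction2


section Construction3

variable {p u : V} {C D K L : Finset V}

lemma W_F_bump (hG : Good p u C D) (hK : K ⊆ C) (hL : L ⊆ D) {y : V} (hy : y ∈ C) :
    W (F p u C D K L) p (u, y)
      = 1 / ((outDeg (F p u C D K L) p : ℝ) * (outDeg (F p u C D K L) u : ℝ)) := by
  set f := F p u C D K L with hf
  unfold W
  rw [if_neg (outDeg_F_p_pos hG hK hL)]
  have h1 : ((u, y).1 : V) ∈ outN f p := by
    rw [outN_F_p hG hK hL]
    exact Finset.mem_insert_self _ _
  rw [if_pos h1]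
  have h2 : ¬ (outDeg f (u, y).1 = 0) := outDeg_F_u_pos hG hK hL
  rw [if_neg h2]
  have h3 : ((u, y).2 : V) ∈ outN f (u, y).1 := by
    show y ∈ outN f u
    rw [outN_F_u hG hK hL]
    exact Finset.mem_insert_of_mem (Finset.mem_union_left _ hy)
  rw [if_pos h3]

lemma sum_W_bump (hG : Good p u C D) (hK : K ⊆ C) (hL : L ⊆ D) :
    (∑ x : V × V, W (F p u C D K L) p x * (if x.1 = u ∧ x.2 ∈ C \ K then (1:ℝ) else 0))
      = ((C \ K).card : ℝ)
        / ((outDeg (F p u C D K L) p : ℝ) * (outDeg (F p u C D K L) u : ℝ)) := by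
  set f := F p u C D K L with hf
  rw [Fintype.sum_prod_type]
  rw [Finset.sum_eq_single u
    (fun v _ hv => Finset.sum_eq_zero fun w _ => by simp [hv])
    (fun h => absurd (Finset.mem_univ u) h)]
  have hstep : ∀ w : V, W f p (u, w) * (if (u, w).1 = u ∧ (u, w).2 ∈ C \ K then (1:ℝ) else 0)
      = if w ∈ C \ K then W f p (u, w) else 0 := by
    intro w
    by_cases hw : w ∈ C \ K
    · rw [if_pos ⟨rfl, hw⟩, if_pos hw, mul_one]
    · rw [if_neg (fun hcon => hw hcon.2), if_neg hw, mul_zero]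
  rw [Finset.sum_congr rfl fun w _ => hstep w]
  rw [Finset.sum_ite_mem, Finset.univ_inter]
  rw [Finset.sum_congr rfl (fun w hw =>
    W_F_bump hG hK hL (Finset.mem_sdiff.mp hw).1)]
  rw [Finset.sum_const, nsmul_eq_mul]
  rw [mul_one_div]

variable (p u C D) in
def Phi (R : ℝ) (g : V → V → Bool) : ℝ :=
  if InRange p u C D g then hFn C.card R (Kof p C g).card else 1

lemma Phi_nonneg (hR : 0 ≤ R) (g : V → V → Bool) : 0 ≤ Phi p u C D R g := by
  unfold Phi
  split_ifs
  · exact hFn_nonneg hR _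
  · exact zero_le_one

lemma Phi_le_one (hR : 0 ≤ R) (g : V → V → Bool) : Phi p u C D R g ≤ 1 := by
  unfold Phi
  split_ifs
  · exact hFn_le_one hR _
  · exact le_refl 1

lemma Phi_F (hG : Good p u C D) (hK : K ⊆ C) (hL : L ⊆ D) {R : ℝ} :
    Phi p u C D R (F p u C D K L) = hFn C.card R K.card := by
  unfold Phi
  rw [if_pos (InRange_F hG hK hL), Kof_F hG hK hL]

lemma one_step (hG : Good p u C D) {R : ℝ} (hR : 0 ≤ R) (g : V → V → Bool) :
    ∑ g' : V → V → Bool, dirStep g g' * Phi p u C D R g'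
      ≤ (1 + R / (((C.card : ℝ) + 1) * ((D.card : ℝ) + 1))) * Phi p u C D R g := by
  set Q : ℝ := ((C.card : ℝ) + 1) * ((D.card : ℝ) + 1) with hQ
  have hQpos : 0 < Q := by positivity
  have hcoef : (1:ℝ) ≤ 1 + R / Q := by
    have : 0 ≤ R / Q := by positivity
    linarith
  rw [sum_dirStep_mul]
  by_cases hg : InRange p u C D g
  · -- in range
    have hgF : g = F p u C D (Kof p C g) (Lof u D g) := hg
    set K := Kof p C g with hKdef
    set L := Lof u D g with hLdef
    have hK : K ⊆ C := Kof_subset g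
    have hL : L ⊆ D := Lof_subset g
    set k := K.card with hk
    set cN := C.card with hcN
    have hkc : k ≤ cN := Finset.card_le_card hK
    set hh := hFn cN R with hhdef
    have hmono : hh k ≤ hh (k+1) := hFn_mono hR k
    have hΔ : 0 ≤ hh (k+1) - hh k := by linarith
    -- pointwise bound
    have hpt : ∀ ch : V → V × V, dirWeight g ch * Phi p u C D R (dirNext g ch)
        ≤ dirWeight g ch * hh k
          + (dirWeight g ch * (if (ch p).1 = u ∧ (ch p).2 ∈ C \ K then (1:ℝ) else 0))
            * (hh (k+1) - hh k) := by
      intro ch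
      by_cases hw : dirWeight g ch = 0
      · rw [hw]; simp
      · have hsupp : dirNext g ch = F p u C D (Knext p u C K ch) (Lnext p u D L ch) := by
          rw [hgF] at hw ⊢
          exact dirNext_support hG hK hL hw
        rw [hsupp, Phi_F hG (Knext_subset hK ch) (Lnext_subset hL ch)]
        by_cases hb : (ch p).1 = u ∧ (ch p).2 ∈ C \ K
        · have hcard : (Knext p u C K ch).card = k + 1 := by
            unfold Knext
            rw [if_pos ⟨hb.1, (Finset.mem_sdiff.mp hb.2).1⟩]
            rw [Finset.card_insert_of_notMem (Finset.mem_sdiff.mp hb.2).2]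
          rw [hcard, if_pos hb, mul_one]
          have : dirWeight g ch * hh k + dirWeight g ch * (hh (k + 1) - hh k)
              = dirWeight g ch * hh (k+1) := by ring
          rw [this]
        · have hcard : (Knext p u C K ch).card = k := by
            unfold Knext
            split_ifs with hc
            · have h2 : (ch p).2 ∈ K := by
                by_contra hnot
                exact hb ⟨hc.1, Finset.mem_sdiff.mpr ⟨hc.2, hnot⟩⟩
              rw [Finset.insert_eq_self.mpr h2]
            · rfl
          rw [hcard, if_neg hb, mul_zero, zero_mul, add_zero]
    -- sum it
    have hsum := Finset.sum_le_sum (fun ch (_ : ch ∈ (Finset.univ : Finset (V → V × V))) => hpt ch)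
    rw [Finset.sum_add_distrib] at hsum
    rw [← Finset.sum_mul, ← Finset.sum_mul, sum_dirWeight, one_mul] at hsum
    have hbump : (∑ ch : V → V × V,
          dirWeight g ch * (if (ch p).1 = u ∧ (ch p).2 ∈ C \ K then (1:ℝ) else 0))
        = ((C \ K).card : ℝ)
          / ((outDeg g p : ℝ) * (outDeg g u : ℝ)) := by
      have hfac := sum_dirWeight_mul g p
        (fun x : V × V => if x.1 = u ∧ x.2 ∈ C \ K then (1:ℝ) else 0)
      rw [hfac]
      conv_lhs => rw [hgF]
      conv_rhs => rw [hgF]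
      exact sum_W_bump hG hK hL
    rw [hbump] at hsum
    have hdegp : (outDeg g p : ℝ) ≥ (D.card : ℝ) + 1 := by
      conv_lhs => rw [hgF]
      rw [outDeg_F_p hG hK hL]
      push_cast
      linarith [Nat.cast_nonneg (α := ℝ) K.card]
    have hdegu : (outDeg g u : ℝ) ≥ (C.card : ℝ) + 1 := by
      conv_lhs => rw [hgF]
      rw [outDeg_F_u hG hK hL]
      push_cast
      linarith [Nat.cast_nonneg (α := ℝ) L.card]
    have hdegp0 : (0:ℝ) < (outDeg g p : ℝ) := by
      have : (0:ℝ) < (D.card : ℝ) + 1 := by have := Nat.cast_nonneg (α := ℝ) D.card; linarith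
      linarith
    have hdegu0 : (0:ℝ) < (outDeg g u : ℝ) := by
      have : (0:ℝ) < (C.card : ℝ) + 1 := by have := Nat.cast_nonneg (α := ℝ) C.card; linarith
      linarith
    have hcardeq : ((C \ K).card : ℝ) = (cN : ℝ) - k := by
      rw [Finset.card_sdiff_of_subset hK]
      push_cast [Nat.cast_sub hkc]
      exact Nat.cast_sub hkc
    have hnum : (0:ℝ) ≤ (cN:ℝ) - k := by
      have : (k:ℝ) ≤ cN := by exact_mod_cast hkc
      linarith
    have hle : Q ≤ (outDeg g p : ℝ) * (outDeg g u : ℝ) := by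
      calc Q = ((D.card:ℝ)+1) * ((C.card:ℝ)+1) := by rw [hQ]; ring
        _ ≤ (outDeg g p : ℝ) * (outDeg g u : ℝ) :=
            mul_le_mul hdegp hdegu (by have := Nat.cast_nonneg (α := ℝ) C.card; linarith) (le_of_lt hdegp0)
    have hfrac : ((C \ K).card : ℝ) / ((outDeg g p : ℝ) * (outDeg g u : ℝ))
        ≤ ((cN : ℝ) - k) / Q := by
      rw [hcardeq]
      exact div_le_div_of_nonneg_left hnum hQpos hle
    have hkey := hFn_key (cN := cN) (R := R) hR hkc
    have hdiv : ((cN:ℝ) - k)/Q * (hh (k+1) - hh k) ≤ R / Q * hh k := by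
      rw [div_mul_eq_mul_div, div_mul_eq_mul_div]
      exact (div_le_div_iff_of_pos_right hQpos).mpr hkey
    have hb2 : (↑(C \ K).card / (↑(outDeg g p) * ↑(outDeg g u))) * (hh (k+1) - hh k)
        ≤ ((cN:ℝ) - k)/Q * (hh (k+1) - hh k) := mul_le_mul_of_nonneg_right hfrac hΔ
    have hPhig : Phi p u C D R g = hh k := by
      conv_lhs => rw [hgF]
      rw [Phi_F hG hK hL]
    rw [hPhig]
    have hexp : (1 + R/Q) * hh k = hh k + R/Q * hh k := by ring
    rw [hexp]
    linarith
  · -- off range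
    have h1 : (∑ ch : V → V × V, dirWeight g ch * Phi p u C D R (dirNext g ch)) ≤ 1 := by
      calc (∑ ch : V → V × V, dirWeight g ch * Phi p u C D R (dirNext g ch))
          ≤ ∑ ch : V → V × V, dirWeight g ch * 1 :=
            Finset.sum_le_sum fun ch _ =>
              mul_le_mul_of_nonneg_left (Phi_le_one hR _) (dirWeight_nonneg g ch)
        _ = 1 := by rw [← Finset.sum_mul, sum_dirWeight, one_mul]
    have h2 : Phi p u C D R g = 1 := by
      unfold Phi
      rw [if_neg hg]
    rw [h2, mul_one]
    linarith

end Construction3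


section Numeric

lemma NFACT : ∀ (a b : ℕ), a.factorial * ∏ i ∈ Finset.range b, (a + 1 + i) = (a + b).factorial := by
  intro a b
  induction b with
  | zero => simp
  | succ b ih =>
    rw [Finset.prod_range_succ, ← mul_assoc, ih]
    rw [show a + (b+1) = (a + b) + 1 by ring, Nat.factorial_succ]
    ring

lemma prod_real_fact (b : ℕ) : (∏ i ∈ Finset.range b, ((i:ℝ) + 1)) = (b.factorial : ℝ) := by
  induction b with
  | zero => simp
  | succ b ih =>
    rw [Finset.prod_range_succ, ih, Nat.factorial_succ]
    push_cast
    ring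

lemma prod_real_shift (a b : ℕ) :
    (∏ i ∈ Finset.range b, ((i:ℝ) + 1 + a)) = ((a + b).factorial : ℝ) / (a.factorial : ℝ) := by
  have h := NFACT a b
  have hcast : ((a.factorial * ∏ i ∈ Finset.range b, (a + 1 + i) : ℕ) : ℝ)
      = ((a + b).factorial : ℝ) := by exact_mod_cast congrArg (Nat.cast (R := ℝ)) h
  push_cast at hcast
  have hprod : (∏ i ∈ Finset.range b, ((a:ℝ) + 1 + i)) = ∏ i ∈ Finset.range b, ((i:ℝ) + 1 + a) :=
    Finset.prod_congr rfl fun i _ => by ring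
  rw [hprod] at hcast
  have hfa : (a.factorial : ℝ) ≠ 0 := by
    exact_mod_cast Nat.factorial_ne_zero a
  field_simp
  linarith [hcast]

lemma hFn_zero_eq (cN r : ℕ) :
    hFn cN (r : ℝ) 0 = (cN.factorial : ℝ) * (r.factorial : ℝ) / ((r + cN).factorial : ℝ) := by
  unfold hFn
  rw [Nat.sub_zero]
  rw [Finset.prod_div_distrib, prod_real_fact, prod_real_shift r cN]
  have h1 : ((r + cN).factorial : ℝ) ≠ 0 := by exact_mod_cast Nat.factorial_ne_zero _
  have h2 : (r.factorial : ℝ) ≠ 0 := by exact_mod_cast Nat.factorial_ne_zero _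
  field_simp

lemma hFn_zero_le (cN r : ℕ) (hc : 0 < cN) :
    hFn cN (r : ℝ) 0 ≤ ((r : ℝ) / (cN : ℝ)) ^ r := by
  rw [hFn_zero_eq]
  have key : (cN.factorial : ℝ) * (r.factorial : ℝ) / ((r + cN).factorial : ℝ)
      = ∏ j ∈ Finset.range r, (((j:ℝ) + 1) / ((cN : ℝ) + 1 + j)) := by
    rw [Finset.prod_div_distrib, prod_real_fact,
      show (∏ x ∈ Finset.range r, (((cN:ℝ) + 1 + (x:ℝ)))) = ∏ x ∈ Finset.range r, ((x:ℝ) + 1 + (cN:ℝ)) from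
        Finset.prod_congr rfl fun i _ => by ring,
      prod_real_shift cN r]
    have h1 : ((cN + r).factorial : ℝ) ≠ 0 := by exact_mod_cast Nat.factorial_ne_zero _
    have h2 : (cN.factorial : ℝ) ≠ 0 := by exact_mod_cast Nat.factorial_ne_zero _
    rw [show r + cN = cN + r by ring]
    field_simp
  rw [key]
  have hbound : ∀ j ∈ Finset.range r, ((j:ℝ) + 1) / ((cN : ℝ) + 1 + j) ≤ (r : ℝ) / (cN : ℝ) := by
    intro j hj
    rw [Finset.mem_range] at hj
    have hcpos : (0:ℝ) < (cN : ℝ) := by exact_mod_cast hc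
    have hdpos : (0:ℝ) < (cN : ℝ) + 1 + j := by positivity
    rw [div_le_div_iff₀ hdpos hcpos]
    have hjr : (j:ℝ) + 1 ≤ (r:ℝ) := by
      have : (j:ℕ) + 1 ≤ r := hj
      exact_mod_cast this
    have hj0 : (0:ℝ) ≤ (j:ℝ) := Nat.cast_nonneg j
    nlinarith
  calc (∏ j ∈ Finset.range r, (((j:ℝ) + 1) / ((cN : ℝ) + 1 + j)))
      ≤ ∏ j ∈ Finset.range r, ((r : ℝ) / (cN : ℝ)) := by
        refine Finset.prod_le_prod (fun j _ => by positivity) hbound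
    _ = ((r : ℝ) / (cN : ℝ)) ^ r := by
        rw [Finset.prod_const, Finset.card_range]

end Numeric

section Mono

variable {V : Type} [Fintype V] [DecidableEq V]

lemma traj_mono {T : ℕ} {s : Fin (T+1) → (V → V → Bool)}
    (hP : ∀ i : Fin T, dirStep (s i.castSucc) (s i.succ) ≠ 0) :
    ∀ (d : ℕ) (i j : Fin (T+1)), (i:ℕ) + d = (j:ℕ) →
      ∀ a b, s i a b = true → s j a b = true := by
  intro d
  induction d with
  | zero =>
    intro i j hij a b hab
    have : i = j := Fin.ext (by omega)
    rwa [← this]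
  | succ d ih =>
    intro i j hij a b hab
    have hjT : (j:ℕ) < T + 1 := j.isLt
    have hd : (i:ℕ) + d < T := by omega
    have h1 : s ⟨(i:ℕ) + d, by omega⟩ a b = true := ih i ⟨(i:ℕ) + d, by omega⟩ rfl a b hab
    have hidx : (⟨(i:ℕ)+d, hd⟩ : Fin T).castSucc = (⟨(i:ℕ) + d, by omega⟩ : Fin (T+1)) :=
      Fin.ext rfl
    have hidx2 : (⟨(i:ℕ)+d, hd⟩ : Fin T).succ = j := Fin.ext (by
      simp only [Fin.val_succ]
      omega)
    have hmono := dirStep_mono (hP ⟨(i:ℕ)+d, hd⟩) a b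
    rw [hidx, hidx2] at hmono
    exact hmono h1

end Mono


end TwoHopAux

end

set_option maxHeartbeats 1000000

/-- For all sufficiently large `n` divisible by `4`, there is a
weakly connected simple directed graph `G₀` (no self-loops) on `n` vertices such that
the probability that the directed two-hop process started at `G₀` terminates within
`⌊(n²·ln n)/32⌋` rounds is at most `exp(−√n/3)`. -/
theorem directed_twoHop_weakly_connected_lower_bound :
    ∃ N : ℕ, ∀ n : ℕ, N ≤ n → 4 ∣ n →
      ∃ f0 : Fin n → Fin n → Bool,
        (∀ v, f0 v v = false) ∧
        (∀ u v : Fin n,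
          Relation.ReflTransGen (fun a b => f0 a b = true ∨ f0 b a = true) u v) ∧
        ∀ T : ℕ, T = ⌊((n : ℝ) ^ 2 * Real.log n) / 32⌋₊ →
          trajProb dirStep f0 T (fun g => ∃ t ≤ T, terminated f0 (g t)) ≤
            Real.exp (-Real.sqrt n / 3) := by
  refine ⟨3^30, fun n hn h4 => ?_⟩
  obtain ⟨q, hq⟩ := h4
  have hn4 : 4 ≤ n := le_trans (by norm_num) hn
  have hn0 : 0 < n := by omega
  obtain ⟨m, hm2, hnm⟩ : ∃ m : ℕ, 2 ≤ m ∧ n = 2 * m := ⟨n/2, by omega, by omega⟩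
  obtain ⟨cN, hcN1, hcNm⟩ : ∃ c : ℕ, 1 ≤ c ∧ c + 1 = m := ⟨m - 1, by omega, by omega⟩
  have h2cn : 2 + cN + cN = n := by omega
  obtain ⟨pV, hpVval⟩ : ∃ x : Fin n, x.val = 0 := ⟨⟨0, by omega⟩, rfl⟩
  obtain ⟨uV, huVval⟩ : ∃ x : Fin n, x.val = 1 := ⟨⟨1, by omega⟩, rfl⟩
  obtain ⟨Cset, hCmem, hCcard⟩ :
      ∃ s : Finset (Fin n), (∀ x : Fin n, x ∈ s ↔ 2 ≤ x.val ∧ x.val < 2 + cN) ∧ s.card = cN := by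
    refine ⟨(Finset.Ico 2 (2+cN)).attachFin
      (fun x hx => by rw [Finset.mem_Ico] at hx; omega), fun x => ?_, ?_⟩
    · rw [Finset.mem_attachFin, Finset.mem_Ico]
    · rw [Finset.card_attachFin, Nat.card_Ico]; omega
  obtain ⟨Dset, hDmem, hDcard⟩ :
      ∃ s : Finset (Fin n), (∀ x : Fin n, x ∈ s ↔ 2 + cN ≤ x.val ∧ x.val < n) ∧ s.card = cN := by
    refine ⟨(Finset.Ico (2+cN) n).attachFin
      (fun x hx => by rw [Finset.mem_Ico] at hx; omega), fun x => ?_, ?_⟩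
    · rw [Finset.mem_attachFin, Finset.mem_Ico]
    · rw [Finset.card_attachFin, Nat.card_Ico]; omega
  have hG : TwoHopAux.Good pV uV Cset Dset := by
    constructor
    · intro h
      have := congrArg Fin.val h
      rw [hpVval, huVval] at this
      omega
    · intro h; have := (hCmem pV).mp h; omega
    · intro h; have := (hDmem pV).mp h; omega
    · intro h; have := (hCmem uV).mp h; omega
    · intro h; have := (hDmem uV).mp h; omega
    · rw [Finset.disjoint_left]
      intro a ha hb
      have h1 := (hCmem a).mp ha
      have h2 := (hDmem a).mp hb
      omega
  obtain ⟨f0, hf0⟩ : ∃ f0 : Fin n → Fin n → Bool, f0 = TwoHopAux.F pV uV Cset Dset ∅ ∅ :=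
    ⟨_, rfl⟩
  have hedge_pu : f0 pV uV = true := by
    rw [hf0, TwoHopAux.F_true_iff]; exact Or.inl ⟨rfl, Or.inl rfl⟩
  have hedge_pD : ∀ y ∈ Dset, f0 pV y = true := fun y hy => by
    rw [hf0, TwoHopAux.F_true_iff]; exact Or.inl ⟨rfl, Or.inr (Or.inl hy)⟩
  have hedge_uC : ∀ y ∈ Cset, f0 uV y = true := fun y hy => by
    rw [hf0, TwoHopAux.F_true_iff]; exact Or.inr ⟨rfl, Or.inr (Or.inl hy)⟩
  refine ⟨f0, ?_, ?_, ?_⟩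
  · -- no self loops
    intro v
    cases hfv : f0 v v with
    | false => rfl
    | true =>
      exfalso
      rw [hf0, TwoHopAux.F_true_iff] at hfv
      rcases hfv with ⟨h1, h2 | h2 | h2⟩ | ⟨h1, h2 | h2 | h2⟩
      · have e1 := congrArg Fin.val h1
        have e2 := congrArg Fin.val h2
        rw [hpVval] at e1; rw [huVval] at e2; omega
      · have e1 := congrArg Fin.val h1
        rw [hpVval] at e1
        have e2 := (hDmem v).mp h2
        omega
      · exact absurd h2 (Finset.notMem_empty v)
      · have e1 := congrArg Fin.val h1
        have e2 := congrArg Fin.val h2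
        rw [huVval] at e1; rw [hpVval] at e2; omega
      · have e1 := congrArg Fin.val h1
        rw [huVval] at e1
        have e2 := (hCmem v).mp h2
        omega
      · exact absurd h2 (Finset.notMem_empty v)
  · -- weak connectivity
    intro a b
    have hsym : Symmetric (fun a b : Fin n => f0 a b = true ∨ f0 b a = true) :=
      fun x y h => Or.symm h
    have hp : ∀ v : Fin n, Relation.ReflTransGen
        (fun a b : Fin n => f0 a b = true ∨ f0 b a = true) pV v := by
      intro v
      by_cases h0 : v.val = 0
      · have hv : v = pV := Fin.ext (by rw [h0, hpVval])
        rw [hv]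
      · by_cases h1 : v.val = 1
        · have hv : v = uV := Fin.ext (by rw [h1, huVval])
          rw [hv]
          exact Relation.ReflTransGen.single (Or.inl hedge_pu)
        · by_cases h2 : v.val < 2 + cN
          · have hvC : v ∈ Cset := (hCmem v).mpr (by omega)
            exact Relation.ReflTransGen.head (Or.inl hedge_pu)
              (Relation.ReflTransGen.single (Or.inl (hedge_uC v hvC)))
          · have hvD : v ∈ Dset := (hDmem v).mpr (by have := v.isLt; omega)
            exact Relation.ReflTransGen.single (Or.inl (hedge_pD v hvD))
    exact Relation.ReflTransGen.trans
      ((@Relation.ReflTransGen.symmetric _ _ ⟨fun x y h => hsym h⟩).symm _ _ (hp a)) (hp b)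
  · -- probability bound
    intro T hT
    obtain ⟨r, hr⟩ : ∃ r : ℕ, r = Nat.sqrt n := ⟨_, rfl⟩
    set R : ℝ := (r : ℝ) with hRdef
    have hR0 : (0:ℝ) ≤ R := Nat.cast_nonneg r
    have hr4 : 4 ≤ r := by
      rw [hr]
      exact Nat.le_sqrt.mpr (by omega)
    have hRpos : (0:ℝ) < R := by
      rw [hRdef]
      exact_mod_cast Nat.lt_of_lt_of_le (by norm_num) hr4
    have hone := fun g => TwoHopAux.one_step (p := pV) (u := uV) (C := Cset) (D := Dset)
      hG hR0 g
    have hcoef1 : (1:ℝ) ≤ 1 + R / (((Cset.card : ℝ) + 1) * ((Dset.card : ℝ) + 1)) := by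
      have h1 : (0:ℝ) ≤ R / (((Cset.card : ℝ) + 1) * ((Dset.card : ℝ) + 1)) := by positivity
      linarith
    have hΦnn : ∀ g, 0 ≤ TwoHopAux.Phi pV uV Cset Dset R g := TwoHopAux.Phi_nonneg hR0
    have hstep1 : trajProb dirStep f0 T (fun g => ∃ t ≤ T, terminated f0 (g t))
        ≤ ∑ s : Fin (T+1) → (Fin n → Fin n → Bool),
            (@ite ℝ (s 0 = f0) (Classical.propDecidable _)
                (∏ i : Fin T, dirStep (s i.castSucc) (s i.succ)) 0)
              * TwoHopAux.Phi pV uV Cset Dset R (s (Fin.last T)) := by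
      rw [trajProb]
      refine Finset.sum_le_sum fun s _ => ?_
      have hPnn : (0:ℝ) ≤ ∏ i : Fin T, dirStep (s i.castSucc) (s i.succ) :=
        Finset.prod_nonneg fun i _ => TwoHopAux.dirStep_nonneg _ _
      split_ifs with h1 h2
      · by_cases hP0 : (∏ i : Fin T, dirStep (s i.castSucc) (s i.succ)) = 0
        · rw [hP0, zero_mul]
        · have hsteps : ∀ i : Fin T, dirStep (s i.castSucc) (s i.succ) ≠ 0 :=
            fun i => Finset.prod_ne_zero_iff.mp hP0 i (Finset.mem_univ i)
          obtain ⟨t, ht, hterm⟩ := h1.2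
          have hPy : ∀ y ∈ Cset, s (Fin.last T) pV y = true := by
            intro y hy
            have hyv := (hCmem y).mp hy
            have hne : pV ≠ y := by
              intro h
              have := congrArg Fin.val h
              rw [hpVval] at this
              omega
            have hreach : reaches f0 pV y :=
              Relation.ReflTransGen.head hedge_pu
                (Relation.ReflTransGen.single (hedge_uC y hy))
            have h1y := hterm pV y hne hreach
            exact TwoHopAux.traj_mono hsteps (T - min t T)
              ⟨min t T, Nat.lt_succ_of_le (Nat.min_le_right t T)⟩ (Fin.last T)
              (by show min t T + (T - min t T) = T; omega) pV y h1y
          have hΦ1 : TwoHopAux.Phi pV uV Cset Dset R (s (Fin.last T)) = 1 := by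
            rw [TwoHopAux.Phi]
            split_ifs with hin
            · rw [show TwoHopAux.Kof pV Cset (s (Fin.last T)) = Cset from
                Finset.filter_true_of_mem (fun y hy => hPy y hy)]
              exact TwoHopAux.hFn_self
            · rfl
          rw [hΦ1, mul_one]
      · exact absurd h1.1 h2
      · exact mul_nonneg hPnn (hΦnn _)
      · rw [zero_mul]
    have hstep2 := TwoHopAux.traj_bound dirStep (TwoHopAux.Phi pV uV Cset Dset R)
      (1 + R / (((Cset.card : ℝ) + 1) * ((Dset.card : ℝ) + 1)))
      hcoef1 TwoHopAux.dirStep_nonneg hΦnn hone T f0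
    have hΦ0 : TwoHopAux.Phi pV uV Cset Dset R f0 = TwoHopAux.hFn Cset.card R 0 := by
      rw [hf0,
        TwoHopAux.Phi_F hG (Finset.empty_subset _) (Finset.empty_subset _),
        Finset.card_empty]
    rw [hΦ0] at hstep2
    refine le_trans hstep1 (le_trans hstep2 ?_)
    -- numeric endgame
    clear hstep1 hstep2 hone hΦnn hΦ0 hcoef1 hedge_pu hedge_uC hedge_pD hf0 hG
    have hc0 : 0 < Cset.card := by omega
    have hcR : (0:ℝ) < (Cset.card : ℝ) := by exact_mod_cast hc0
    set c : ℝ := (Cset.card : ℝ) with hcdef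
    set S : ℝ := Real.sqrt n with hSdef
    set Lg : ℝ := Real.log n with hLgdef
    have hn1R : (1:ℝ) ≤ (n:ℝ) := by exact_mod_cast hn0
    have hLg0 : 0 ≤ Lg := Real.log_nonneg hn1R
    have hTle : (T:ℝ) ≤ (n:ℝ)^2 * Lg / 32 := by
      rw [hT]
      exact Nat.floor_le (by positivity)
    have hQeq : ((Cset.card : ℝ) + 1) * ((Dset.card : ℝ) + 1) = (m:ℝ) * (m:ℝ) := by
      rw [hCcard, hDcard]
      have : ((cN:ℝ) + 1) = (m:ℝ) := by exact_mod_cast hcNm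
      rw [this]
    have hmpos : (0:ℝ) < (m:ℝ) := by exact_mod_cast (by omega : 0 < m)
    have hnm2 : (n:ℝ) = 2 * (m:ℝ) := by exact_mod_cast hnm
    set η : ℝ := R / (((Cset.card : ℝ) + 1) * ((Dset.card : ℝ) + 1)) with hηdef
    have hη0 : 0 ≤ η := by
      rw [hηdef, hQeq]; positivity
    have hA : η * (T:ℝ) ≤ R * Lg / 8 := by
      have h1 : η * (T:ℝ) ≤ η * ((n:ℝ)^2 * Lg / 32) :=
        mul_le_mul_of_nonneg_left hTle hη0
      refine le_trans h1 ?_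
      rw [hηdef, hQeq, hnm2]
      rw [div_mul_eq_mul_div, div_le_div_iff₀ (by positivity) (by norm_num)]
      ring_nf
      nlinarith [hR0, hLg0, hmpos, sq_nonneg ((m:ℝ))]
    have hpow : (1 + η)^T ≤ Real.exp (η * T) := by
      calc (1 + η)^T ≤ (Real.exp η)^T := by
            refine pow_le_pow_left₀ (by linarith) ?_ T
            linarith [Real.add_one_le_exp η]
        _ = Real.exp (η * T) := by
            rw [← Real.exp_nat_mul]
            ring_nf
    have hh0 : TwoHopAux.hFn Cset.card R 0 ≤ (R / c)^r :=
      TwoHopAux.hFn_zero_le Cset.card r hc0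
    have hfracpos : 0 < R / c := by positivity
    have hpowexp : (R / c)^r = Real.exp (r * Real.log (R / c)) := by
      conv_lhs => rw [← Real.exp_log hfracpos]
      rw [← Real.exp_nat_mul]
    have hcomb : (1 + η)^T * TwoHopAux.hFn Cset.card R 0
        ≤ Real.exp (η * T + (r:ℝ) * Real.log (R / c)) := by
      rw [Real.exp_add]
      exact mul_le_mul hpow (le_trans hh0 (le_of_eq hpowexp))
        (TwoHopAux.hFn_nonneg hR0 0) (le_of_lt (Real.exp_pos _))
    refine le_trans hcomb ?_
    rw [Real.exp_le_exp]
    -- final scalar inequality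
    rw [Real.log_div (ne_of_gt hRpos) (ne_of_gt hcR)]
    have he3 : Real.exp 1 ≤ 3 := by
      have := Real.exp_one_lt_d9
      linarith
    have he2 : (2:ℝ) ≤ Real.exp 1 := by
      have := Real.add_one_le_exp (1:ℝ)
      linarith
    have hlog3 : (1:ℝ) ≤ Real.log 3 := by
      rw [show (1:ℝ) = Real.log (Real.exp 1) from (Real.log_exp 1).symm]
      exact Real.log_le_log (Real.exp_pos 1) he3
    have hlog30 : (30:ℝ) ≤ Lg := by
      rw [hLgdef]
      have h1 : Real.log ((3:ℝ)^(30:ℕ)) ≤ Real.log n := by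
        refine Real.log_le_log (by positivity) ?_
        have : ((3^30 : ℕ) : ℝ) ≤ (n : ℝ) := by exact_mod_cast hn
        push_cast at this
        linarith
      rw [Real.log_pow] at h1
      push_cast at h1
      linarith
    have hlog4 : Real.log 4 ≤ 2 := by
      have h1 : (4:ℝ) ≤ Real.exp 2 := by
        have : Real.exp 2 = Real.exp 1 * Real.exp 1 := by
          rw [← Real.exp_add]; norm_num
        nlinarith
      rw [show (2:ℝ) = Real.log (Real.exp 2) from (Real.log_exp 2).symm]
      exact Real.log_le_log (by norm_num) h1
    have hRS : R ≤ S := by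
      rw [hSdef]
      refine (Real.le_sqrt hR0 (Nat.cast_nonneg n)).mpr ?_
      rw [hRdef]
      have := Nat.sqrt_le' n
      rw [← hr] at this
      exact_mod_cast this
    have hSR : S - 1 ≤ R := by
      have h1 : S < R + 1 := by
        rw [hSdef]
        refine (Real.sqrt_lt' (by positivity)).mpr ?_
        have h2 := Nat.lt_succ_sqrt n
        rw [← hr] at h2
        have : (n:ℝ) < ((r:ℕ) + 1 : ℕ) * ((r:ℕ) + 1 : ℕ) := by exact_mod_cast h2
        push_cast at this
        nlinarith
      linarith
    have hS2 : 2 ≤ S := by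
      rw [hSdef]
      refine (Real.le_sqrt (by norm_num) (Nat.cast_nonneg n)).mpr ?_
      have : (4:ℝ) ≤ (n:ℝ) := by exact_mod_cast hn4
      nlinarith
    have hS0 : 0 ≤ S := by linarith
    have hSR2 : S / 2 ≤ R := by linarith
    have hlogR : Real.log R ≤ Lg / 2 := by
      have h1 : Real.log R ≤ Real.log S := Real.log_le_log hRpos hRS
      rw [hSdef] at h1
      rw [Real.log_sqrt (Nat.cast_nonneg n)] at h1
      rw [hLgdef]
      exact h1
    have hcn4 : (n:ℝ)/4 ≤ c := by
      rw [hcdef, hCcard]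
      have h1 : ((cN:ℝ)) = (m:ℝ) - 1 := by
        have : (cN:ℝ) + 1 = (m:ℝ) := by exact_mod_cast hcNm
        linarith
      rw [h1, hnm2]
      have : (2:ℝ) ≤ (m:ℝ) := by exact_mod_cast hm2
      linarith
    have hlogc : Lg - Real.log 4 ≤ Real.log c := by
      have h1 : Real.log ((n:ℝ)/4) ≤ Real.log c := by
        refine Real.log_le_log (by positivity) hcn4
      rw [Real.log_div (by positivity) (by norm_num)] at h1
      rw [hLgdef]
      linarith
    -- assemble
    have hkey1 : R * (Real.log R - Real.log c) ≤ R * (Lg / 2 - (Lg - Real.log 4)) := by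
      refine mul_le_mul_of_nonneg_left ?_ hR0
      have := sub_le_sub hlogR hlogc
      linarith
    have hfac : (1:ℝ) ≤ 3 * Lg / 8 - Real.log 4 := by linarith
    have hkey2 : S / 3 ≤ R * (3 * Lg / 8 - Real.log 4) := by
      have h1 : (S/2) * 1 ≤ R * (3 * Lg / 8 - Real.log 4) :=
        mul_le_mul hSR2 hfac (by norm_num) hR0
      linarith
    have hRr : (r : ℝ) = R := rfl
    rw [hRr]
    nlinarith [hA, hkey1, hkey2]
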